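/- Let A ∈ BL(X) and 0 < ε < 1. If z ∈ σ_ε(A) (the ε-condition pseudospectrum), then |z| ≤ ((1+ε)/(1-ε))·‖A‖. -/

import Mathlib

theorem stmt12 {X : Type*} [NormedAddCommGroup X] [NormedSpace ℂ X] [CompleteSpace X]
    [Nontrivial X] (A : X →L[ℂ] X) (ε : ℝ) (hε0 : 0 < ε) (hε1 : ε < 1) (z : ℂ)
    (hz : z ∈ spectrum ℂ A ∨
      ‖A - z • (1 : X →L[ℂ] X)‖ * ‖Ring.inverse (A - z • (1 : X →L[ℂ] X))‖ ≥ ε⁻¹) :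
    ‖z‖ ≤ ((1 + ε) / (1 - ε)) * ‖A‖ := by
  have hε1' : (0:ℝ) < 1 - ε := by linarith
  have ha0 : (0:ℝ) ≤ ‖A‖ := norm_nonneg _
  have hratio1 : (1:ℝ) ≤ (1 + ε) / (1 - ε) := by
    rw [le_div_iff₀ hε1']; linarith
  by_cases hle : ‖z‖ ≤ ((1 + ε) / (1 - ε)) * ‖A‖
  · exact hle
  push_neg at hle
  exfalso
  have hza : ‖A‖ < ‖z‖ := lt_of_le_of_lt (le_mul_of_one_le_left ha0 hratio1) hle
  have hzn : (0:ℝ) < ‖z‖ := lt_of_le_of_lt ha0 hza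
  have hz0 : z ≠ 0 := by
    intro h; rw [h, norm_zero] at hzn; exact lt_irrefl _ hzn
  -- z is not in the spectrum
  rcases hz with hz | hz
  · exact absurd (spectrum.norm_le_norm_of_mem hz) (not_le.2 hza)
  -- construct the inverse explicitly
  set t : X →L[ℂ] X := z⁻¹ • A with ht
  have htn : ‖t‖ = ‖z‖⁻¹ * ‖A‖ := by rw [ht, norm_smul z⁻¹ A, norm_inv]
  have ht1 : ‖t‖ < 1 := by
    rw [htn, inv_mul_lt_iff₀ hzn, mul_one]; exact hza
  set S : X →L[ℂ] X := ∑' n : ℕ, t ^ n with hS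
  have hfact : A - z • (1 : X →L[ℂ] X) = (-z) • ((1 : X →L[ℂ] X) - t) := by
    have h1 : -z * z⁻¹ = -1 := by field_simp
    rw [ht, smul_sub, smul_smul, h1, neg_one_smul, sub_neg_eq_add, neg_smul, neg_add_eq_sub]
  have hmul1 : (A - z • (1 : X →L[ℂ] X)) * ((-z)⁻¹ • S) = 1 := by
    rw [hfact, mul_smul_comm, smul_mul_assoc, smul_smul, inv_mul_cancel₀ (neg_ne_zero.2 hz0),
      one_smul, mul_neg_geom_series t ht1]
  have hmul2 : ((-z)⁻¹ • S) * (A - z • (1 : X →L[ℂ] X)) = 1 := by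
    rw [hfact, mul_smul_comm, smul_mul_assoc, smul_smul, mul_inv_cancel₀ (neg_ne_zero.2 hz0),
      one_smul, geom_series_mul_neg t ht1]
  set u : (X →L[ℂ] X)ˣ :=
    { val := A - z • (1 : X →L[ℂ] X), inv := (-z)⁻¹ • S, val_inv := hmul1, inv_val := hmul2 }
  have hinv : Ring.inverse (A - z • (1 : X →L[ℂ] X)) = (-z)⁻¹ • S :=
    Ring.inverse_unit u
  -- norm bounds
  have hSb : ‖S‖ ≤ (1 - ‖t‖)⁻¹ := by
    have := tsum_geometric_le_of_norm_lt_one t ht1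
    rw [norm_one] at this
    linarith
  have hd : (0:ℝ) < ‖z‖ - ‖A‖ := by linarith
  have hinvb : ‖Ring.inverse (A - z • (1 : X →L[ℂ] X))‖ ≤ (‖z‖ - ‖A‖)⁻¹ := by
    rw [hinv, norm_smul (-z)⁻¹ S, norm_inv, norm_neg]
    have hkey : ‖z‖⁻¹ * (1 - ‖t‖)⁻¹ = (‖z‖ - ‖A‖)⁻¹ := by
      rw [htn, ← mul_inv]
      congr 1
      rw [mul_sub, mul_one, mul_inv_cancel_left₀ (ne_of_gt hzn)]
    calc ‖z‖⁻¹ * ‖S‖ ≤ ‖z‖⁻¹ * (1 - ‖t‖)⁻¹ := by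
          exact mul_le_mul_of_nonneg_left hSb (inv_nonneg.2 hzn.le)
      _ = (‖z‖ - ‖A‖)⁻¹ := hkey
  have hnb : ‖A - z • (1 : X →L[ℂ] X)‖ ≤ ‖z‖ + ‖A‖ := by
    calc ‖A - z • (1 : X →L[ℂ] X)‖ ≤ ‖A‖ + ‖z • (1 : X →L[ℂ] X)‖ := norm_sub_le _ _
      _ ≤ ‖A‖ + ‖z‖ * ‖(1 : X →L[ℂ] X)‖ := by rw [norm_smul z (1 : X →L[ℂ] X)]
      _ = ‖A‖ + ‖z‖ := by rw [norm_one, mul_one]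
      _ = ‖z‖ + ‖A‖ := add_comm _ _
  have hprod : ε⁻¹ ≤ (‖z‖ + ‖A‖) * (‖z‖ - ‖A‖)⁻¹ := by
    refine le_trans hz (mul_le_mul hnb hinvb (norm_nonneg _) (by positivity))
  -- derive contradiction
  have hstep : (1 + ε) * ‖A‖ < (1 - ε) * ‖z‖ := by
    rw [div_mul_eq_mul_div, div_lt_iff₀ hε1'] at hle
    nlinarith [hle]
  nlinarith [mul_inv_cancel₀ (ne_of_gt hε0), mul_inv_cancel₀ (ne_of_gt hd),
    mul_le_mul_of_nonneg_left hprod hε0.le, mul_pos hε0 hd]
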